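/- Let W ⊂ ℝ^d be compact, ℓ : [0,∞) → (0,∞) Lipschitz with constant J₂ and ℓ ≥ ℓ_min > 0 on distances in W. Fix a Lipschitz trajectory y and a finite measure ν̄ on the trajectory space with ν̄(L) > 0. Then the map x ↦ (SIR(x_t, y_t, ν̄_t))_{t} from the space of J₁-Lipschitz trajectories (with supremum norm) to bounded functions on [0,T) (with supremum norm) is Lipschitz continuous with constant J₂/(ℓ_min·ν̄(L)), uniformly in y. -/

import Mathlib

open MeasureTheory
open scoped NNReal

/-- Lipschitz continuity of `x ↦ (SIR(x_t, y_t, ν̄_t))_t` in the trajectory `x`, with respect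
to the supremum norms, with constant `J₂/(ℓ_min · ν̄(L))`, uniformly in `y`. -/
theorem sir_trajectory_lipschitz {d : ℕ} (W : Set (EuclideanSpace ℝ (Fin d))) (T : ℝ)
    (hT : 0 < T) (J₁ J₂ : ℝ≥0) (ℓ : ℝ → ℝ) (hℓ : LipschitzWith J₂ ℓ)
    (ℓmin : ℝ) (hℓmin : 0 < ℓmin)
    (hbd : ∀ ξ ∈ W, ∀ η ∈ W, ℓmin ≤ ℓ (dist ξ η))
    (L : Type*) [MeasurableSpace L] (ev : L → ℝ → EuclideanSpace ℝ (Fin d))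
    (hev_lip : ∀ z, LipschitzWith J₁ (ev z))
    (hev_W : ∀ z, ∀ t ∈ Set.Ico (0 : ℝ) T, ev z t ∈ W)
    (hev_meas : ∀ t, Measurable fun z => ev z t)
    (ν : Measure L) [IsFiniteMeasure ν] (hν : 0 < ν Set.univ)
    (y : ℝ → EuclideanSpace ℝ (Fin d)) (hy : LipschitzWith J₁ y)
    (hyW : ∀ t ∈ Set.Ico (0 : ℝ) T, y t ∈ W) :
    ∀ x x' : ℝ → EuclideanSpace ℝ (Fin d),
      LipschitzWith J₁ x → LipschitzWith J₁ x' →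
      (∀ t ∈ Set.Ico (0 : ℝ) T, x t ∈ W) → (∀ t ∈ Set.Ico (0 : ℝ) T, x' t ∈ W) →
      ∀ t ∈ Set.Ico (0 : ℝ) T,
        |ℓ (dist (x t) (y t)) / ∫ z, ℓ (dist (ev z t) (y t)) ∂ν
          - ℓ (dist (x' t) (y t)) / ∫ z, ℓ (dist (ev z t) (y t)) ∂ν|
        ≤ ((J₂ : ℝ) / (ℓmin * (ν Set.univ).toReal))
            * ⨆ s : Set.Ico (0 : ℝ) T, dist (x s) (x' s) := by

  intro x x' hx hx' hxW hx'W t ht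
  set S := ⨆ s : Set.Ico (0:ℝ) T, dist (x s) (x' s) with hS
  have hSnn : 0 ≤ S := Real.iSup_nonneg fun s => dist_nonneg
  have hm : 0 < (ν Set.univ).toReal := ENNReal.toReal_pos hν.ne' (measure_ne_top ν _)
  have hRHSnn : 0 ≤ (J₂:ℝ)/(ℓmin * (ν Set.univ).toReal) * S := by positivity
  by_cases hint : Integrable (fun z => ℓ (dist (ev z t) (y t))) ν
  · have hIlb : ℓmin * (ν Set.univ).toReal ≤ ∫ z, ℓ (dist (ev z t) (y t)) ∂ν := by
      have := integral_mono (μ := ν) (integrable_const ℓmin) hint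
        (fun z => hbd _ (hev_W z t ht) _ (hyW t ht))
      simpa [integral_const, mul_comm, smul_eq_mul, measureReal_def] using this
    have hIpos : 0 < ∫ z, ℓ (dist (ev z t) (y t)) ∂ν :=
      lt_of_lt_of_le (by positivity) hIlb
    have hdist : dist (x t) (x' t) ≤ S := by
      apply le_ciSup (f := fun s : Set.Ico (0:ℝ) T => dist (x s) (x' s)) ?_ ⟨t, ht⟩
      refine ⟨2*(J₁:ℝ)*T + dist (x 0) (x' 0), ?_⟩
      rintro _ ⟨⟨s, hs0, hsT⟩, rfl⟩
      have h1 : dist (x s) (x 0) ≤ (J₁:ℝ) * T := by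
        have := hx.dist_le_mul s 0
        have hds : dist s 0 ≤ T := by rw [Real.dist_eq]; rw [abs_of_nonneg (by linarith)]; linarith
        calc dist (x s) (x 0) ≤ (J₁:ℝ) * dist s 0 := this
          _ ≤ (J₁:ℝ) * T := by gcongr
      have h2 : dist (x' 0) (x' s) ≤ (J₁:ℝ) * T := by
        have := hx'.dist_le_mul 0 s
        have hds : dist (0:ℝ) s ≤ T := by rw [Real.dist_eq]; rw [abs_of_nonpos (by linarith)]; linarith
        calc dist (x' 0) (x' s) ≤ (J₁:ℝ) * dist (0:ℝ) s := this
          _ ≤ (J₁:ℝ) * T := by gcongr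
      calc dist (x s) (x' s)
          ≤ dist (x s) (x 0) + dist (x 0) (x' 0) + dist (x' 0) (x' s) := dist_triangle4 _ _ _ _
        _ ≤ (J₁:ℝ)*T + dist (x 0) (x' 0) + (J₁:ℝ)*T := by linarith
        _ = 2*(J₁:ℝ)*T + dist (x 0) (x' 0) := by ring
    have hnum : |ℓ (dist (x t) (y t)) - ℓ (dist (x' t) (y t))| ≤ (J₂:ℝ) * S := by
      calc |ℓ (dist (x t) (y t)) - ℓ (dist (x' t) (y t))|
          ≤ (J₂:ℝ) * |dist (x t) (y t) - dist (x' t) (y t)| := by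
            simpa [Real.dist_eq] using hℓ.dist_le_mul (dist (x t) (y t)) (dist (x' t) (y t))
        _ ≤ (J₂:ℝ) * dist (x t) (x' t) := by
            gcongr
            exact abs_dist_sub_le _ _ _
        _ ≤ (J₂:ℝ) * S := by gcongr
    rw [div_sub_div_same, abs_div, abs_of_pos hIpos]
    calc |ℓ (dist (x t) (y t)) - ℓ (dist (x' t) (y t))| / ∫ z, ℓ (dist (ev z t) (y t)) ∂ν
        ≤ ((J₂:ℝ) * S) / (ℓmin * (ν Set.univ).toReal) :=
          div_le_div₀ (by positivity) hnum (by positivity) hIlb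
      _ = (J₂:ℝ) / (ℓmin * (ν Set.univ).toReal) * S := by ring
  · rw [integral_undef hint]
    simpa using hRHSnn
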